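/- Let X be a set of 120 unit vectors in ℝ^8 obtained by choosing one vector from each antipodal pair of the E_8 root system (rescaled to unit length). Then the relations R_i = {(x,y) ∈ X × X : ⟨x,y⟩ = 1 - i/2} for i = 0,1,2,3 do NOT form a (symmetric) association scheme on X. -/

import Mathlib

open scoped Classical

/-- The root system `E_8` in `ℝ^8` (240 vectors of squared norm 2). -/
def rootsE8 : Set (Fin 8 → ℝ) :=
  {v | ∃ i j : Fin 8, i < j ∧
    (v = Pi.single i 1 + Pi.single j (1 : ℝ) ∨
     v = Pi.single i 1 - Pi.single j (1 : ℝ) ∨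
     v = -(Pi.single i 1 + Pi.single j (1 : ℝ)) ∨
     v = -(Pi.single i 1 - Pi.single j (1 : ℝ)))} ∪
  {v | ∃ c : Fin 8 → ℝ, (∀ i, c i = 1 ∨ c i = -1) ∧ (∏ i, c i) = 1 ∧
    v = (1 / 2 : ℝ) • c}

/-- The standard inner product on `ℝ^8`. -/
def dot (x y : Fin 8 → ℝ) : ℝ := ∑ i, x i * y i

/- ### Auxiliary lemmas about `dot` -/

lemma dot_comm' (x y : Fin 8 → ℝ) : dot x y = dot y x := by
  simp [dot, mul_comm]

lemma dot_add_left (x y z : Fin 8 → ℝ) : dot (x + y) z = dot x z + dot y z := by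
  simp [dot, add_mul, Finset.sum_add_distrib]

lemma dot_add_right (x y z : Fin 8 → ℝ) : dot x (y + z) = dot x y + dot x z := by
  simp [dot, mul_add, Finset.sum_add_distrib]

lemma dot_sub_left (x y z : Fin 8 → ℝ) : dot (x - y) z = dot x z - dot y z := by
  simp [dot, sub_mul, Finset.sum_sub_distrib]

lemma dot_sub_right (x y z : Fin 8 → ℝ) : dot x (y - z) = dot x y - dot x z := by
  simp [dot, mul_sub, Finset.sum_sub_distrib]

lemma dot_neg_left (x z : Fin 8 → ℝ) : dot (-x) z = - dot x z := by
  simp [dot]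

lemma dot_neg_right (x z : Fin 8 → ℝ) : dot x (-z) = - dot x z := by
  simp [dot]

lemma dot_smul_left (r : ℝ) (x z : Fin 8 → ℝ) : dot (r • x) z = r * dot x z := by
  simp [dot, Finset.mul_sum, mul_assoc]

lemma dot_smul_right (r : ℝ) (x z : Fin 8 → ℝ) : dot x (r • z) = r * dot x z := by
  rw [dot_comm', dot_smul_left, dot_comm']

lemma dot_self_eq_zero' {x : Fin 8 → ℝ} (h : dot x x = 0) : x = 0 := by
  have := (Finset.sum_eq_zero_iff_of_nonneg (fun i _ => mul_self_nonneg (x i))).1 h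
  funext i
  exact mul_self_eq_zero.1 (this i (Finset.mem_univ i))

lemma dot_single_single (i j : Fin 8) (a b : ℝ) :
    dot (Pi.single i a) (Pi.single j b) = if i = j then a * b else 0 := by
  simp only [dot, Pi.single_apply, ite_mul, zero_mul, mul_ite, mul_zero]
  rw [Finset.sum_ite_eq' Finset.univ j (fun k => if k = i then a * b else 0)]
  simp [eq_comm]

/-- Every `E_8` root has squared norm 2. -/
lemma root_norm {w : Fin 8 → ℝ} (hw : w ∈ rootsE8) : dot w w = 2 := by
  rcases hw with ⟨i, j, hij, hc⟩ | ⟨c, hc1, _, rfl⟩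
  · have hne : i ≠ j := ne_of_lt hij
    rcases hc with rfl | rfl | rfl | rfl <;>
      simp only [dot_add_left, dot_add_right, dot_sub_left, dot_sub_right,
        dot_neg_left, dot_neg_right, dot_single_single] <;>
      norm_num [hne, hne.symm]
  · rw [dot_smul_left, dot_smul_right]
    have : dot c c = 8 := by
      have : ∀ i : Fin 8, c i * c i = 1 := fun i => by
        rcases hc1 i with h | h <;> rw [h] <;> norm_num
      simp [dot, this]
    rw [this]; norm_num

/-- Elements of `X` are unit vectors. -/
lemma unit_of_mem (X : Finset (Fin 8 → ℝ))
    (hX1 : ∀ v ∈ X, ∃ w ∈ rootsE8, v = (Real.sqrt 2)⁻¹ • w)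
    {v : Fin 8 → ℝ} (hv : v ∈ X) : dot v v = 1 := by
  obtain ⟨w, hw, rfl⟩ := hX1 v hv
  rw [dot_smul_left, dot_smul_right, root_norm hw]
  have h2 : Real.sqrt 2 * Real.sqrt 2 = 2 := Real.mul_self_sqrt (by norm_num)
  have hpos : Real.sqrt 2 ≠ 0 := by positivity
  field_simp
  rw [sq, h2]

/-- The key contradiction: if `x = s•w1` and `y = s•w2` are in `X` with
`⟨w1,w2⟩ = 1` and `w1 - w2` is a root, then the association scheme property
fails. -/
lemma key_lemma (X : Finset (Fin 8 → ℝ))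
    (hX1 : ∀ v ∈ X, ∃ w ∈ rootsE8, v = (Real.sqrt 2)⁻¹ • w)
    (hX2 : ∀ w ∈ rootsE8, ((Real.sqrt 2)⁻¹ • w ∈ X ↔ -((Real.sqrt 2)⁻¹ • w) ∉ X))
    (H : ∀ a ∈ ({1, 1/2, 0, -1/2} : Set ℝ), ∀ b ∈ ({1, 1/2, 0, -1/2} : Set ℝ),
        ∀ c ∈ ({1, 1/2, 0, -1/2} : Set ℝ),
        ∀ x ∈ X, ∀ y ∈ X, ∀ x' ∈ X, ∀ y' ∈ X,
        dot x y = c → dot x' y' = c →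
        (X.filter fun z => dot z x = a ∧ dot z y = b).card =
          (X.filter fun z => dot z x' = a ∧ dot z y' = b).card)
    (w1 w2 : Fin 8 → ℝ) (h1 : w1 ∈ rootsE8) (h2 : w2 ∈ rootsE8)
    (hd : dot w1 w2 = 1) (hsub : w1 - w2 ∈ rootsE8)
    (hx : (Real.sqrt 2)⁻¹ • w1 ∈ X) (hy : (Real.sqrt 2)⁻¹ • w2 ∈ X) : False := by
  set s : ℝ := (Real.sqrt 2)⁻¹ with hs
  have hs2 : s * s = 1/2 := by
    rw [hs, ← mul_inv, Real.mul_self_sqrt (by norm_num : (2:ℝ) ≥ 0)]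
    norm_num
  set x : Fin 8 → ℝ := s • w1 with hxdef
  set y : Fin 8 → ℝ := s • w2 with hydef
  have hxx : dot x x = 1 := unit_of_mem X hX1 hx
  have hyy : dot y y = 1 := unit_of_mem X hX1 hy
  have hxy : dot x y = 1/2 := by
    rw [hxdef, hydef, dot_smul_left, dot_smul_right, hd, ← mul_assoc, hs2]
    norm_num
  have hyx : dot y x = 1/2 := by rw [dot_comm']; exact hxy
  -- the candidate z0 = x - y
  have hz0eq : x - y = s • (w1 - w2) := by rw [hxdef, hydef, smul_sub]
  have hz0x : dot (x - y) x = 1/2 := by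
    rw [dot_sub_left, hxx, hyx]; norm_num
  have hz0y : dot (x - y) y = -(1/2) := by
    rw [dot_sub_left, hxy, hyy]; norm_num
  -- uniqueness
  have uniq : ∀ z, dot z z = 1 → dot z x = 1/2 → dot z y = -(1/2) → z = x - y := by
    intro z hzz hzx hzy
    have c1 := dot_comm' x z
    have c2 := dot_comm' y z
    have e0 : dot (z - (x - y)) (z - (x - y)) = 0 := by
      simp only [dot_sub_left, dot_sub_right]
      have c3 := dot_comm' y x
      linarith
    have := dot_self_eq_zero' e0
    exact sub_eq_zero.mp this
  have uniq' : ∀ z, dot z z = 1 → dot z y = 1/2 → dot z x = -(1/2) → z = -(x - y) := by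
    intro z hzz hzy hzx
    have c1 := dot_comm' x z
    have c2 := dot_comm' y z
    have e0 : dot (z - (y - x)) (z - (y - x)) = 0 := by
      simp only [dot_sub_left, dot_sub_right]
      have c3 := dot_comm' y x
      linarith
    have := dot_self_eq_zero' e0
    rw [neg_sub]
    exact sub_eq_zero.mp this
  have hnz0x : dot (-(x - y)) x = -(1/2) := by rw [dot_neg_left, hz0x]
  have hnz0y : dot (-(x - y)) y = 1/2 := by rw [dot_neg_left, hz0y]; norm_num
  -- exactly one of x - y, -(x - y) is in X
  have hhalf : x - y ∈ X ↔ -(x - y) ∉ X := by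
    rw [hz0eq]; exact hX2 (w1 - w2) hsub
  have ha : (1/2 : ℝ) ∈ ({1, 1/2, 0, -1/2} : Set ℝ) := by norm_num [Set.mem_insert_iff]
  have hb : (-(1/2) : ℝ) ∈ ({1, 1/2, 0, -1/2} : Set ℝ) := by norm_num [Set.mem_insert_iff]
  have hcard := H (1/2) ha (-(1/2)) hb (1/2) ha x hx y hy y hy x hx hxy hyx
  by_cases hmem : x - y ∈ X
  · have hnmem : -(x - y) ∉ X := hhalf.mp hmem
    have e1 : (X.filter fun z => dot z x = 1/2 ∧ dot z y = -(1/2)) = {x - y} := by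
      ext z
      simp only [Finset.mem_filter, Finset.mem_singleton]
      constructor
      · rintro ⟨hzX, hz1, hz2⟩
        exact uniq z (unit_of_mem X hX1 hzX) hz1 hz2
      · rintro rfl
        exact ⟨hmem, hz0x, hz0y⟩
    have e2 : (X.filter fun z => dot z y = 1/2 ∧ dot z x = -(1/2)) = ∅ := by
      rw [Finset.filter_eq_empty_iff]
      rintro z hzX ⟨hz1, hz2⟩
      have := uniq' z (unit_of_mem X hX1 hzX) hz1 hz2
      rw [this] at hzX
      exact hnmem hzX
    rw [e1, e2] at hcard
    simp at hcard
  · have hnmem : -(x - y) ∈ X := by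
      by_contra hn
      exact hmem (hhalf.mpr hn)
    have e1 : (X.filter fun z => dot z x = 1/2 ∧ dot z y = -(1/2)) = ∅ := by
      rw [Finset.filter_eq_empty_iff]
      rintro z hzX ⟨hz1, hz2⟩
      have := uniq z (unit_of_mem X hX1 hzX) hz1 hz2
      rw [this] at hzX
      exact hmem hzX
    have e2 : (X.filter fun z => dot z y = 1/2 ∧ dot z x = -(1/2)) = {-(x - y)} := by
      ext z
      simp only [Finset.mem_filter, Finset.mem_singleton]
      constructor
      · rintro ⟨hzX, hz1, hz2⟩
        exact uniq' z (unit_of_mem X hX1 hzX) hz1 hz2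
      · rintro rfl
        exact ⟨hnmem, hnz0y, hnz0x⟩
    rw [e1, e2] at hcard
    simp at hcard

/- ### Specific roots -/

lemma mem_pair (i j : Fin 8) (hij : i < j) :
    (Pi.single i 1 + Pi.single j (1:ℝ)) ∈ rootsE8 :=
  Or.inl ⟨i, j, hij, Or.inl rfl⟩

lemma mem_pair_neg (i j : Fin 8) (hij : i < j) :
    (-(Pi.single i 1 + Pi.single j (1:ℝ))) ∈ rootsE8 :=
  Or.inl ⟨i, j, hij, Or.inr (Or.inr (Or.inl rfl))⟩

lemma mem_diff (i j : Fin 8) (hij : i < j) :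
    (Pi.single i 1 - Pi.single j (1:ℝ)) ∈ rootsE8 :=
  Or.inl ⟨i, j, hij, Or.inr (Or.inl rfl)⟩

lemma mem_diff_neg (i j : Fin 8) (hij : i < j) :
    (-(Pi.single i 1 - Pi.single j (1:ℝ))) ∈ rootsE8 :=
  Or.inl ⟨i, j, hij, Or.inr (Or.inr (Or.inr rfl))⟩

/-- For a root `w`, either `s • w ∈ X` or `s • (-w) ∈ X`. -/
lemma pick_half (X : Finset (Fin 8 → ℝ))
    (hX2 : ∀ w ∈ rootsE8, ((Real.sqrt 2)⁻¹ • w ∈ X ↔ -((Real.sqrt 2)⁻¹ • w) ∉ X))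
    (w : Fin 8 → ℝ) (hw : w ∈ rootsE8) :
    (Real.sqrt 2)⁻¹ • w ∈ X ∨ (Real.sqrt 2)⁻¹ • (-w) ∈ X := by
  by_cases h : (Real.sqrt 2)⁻¹ • w ∈ X
  · exact Or.inl h
  · right
    rw [smul_neg]
    by_contra hn
    exact h ((hX2 w hw).mpr hn)

/-- For any half `X` of the normalized `E_8` root system (one unit vector from
each antipodal pair), the relations `R_i = {(x,y) : ⟨x,y⟩ = 1 - i/2}`,
`i = 0,1,2,3`, do not form an association scheme on `X`: the intersection
numbers `p_{ij}^k` are not well defined. -/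
theorem stmt_14 (X : Finset (Fin 8 → ℝ))
    (hX1 : ∀ v ∈ X, ∃ w ∈ rootsE8, v = (Real.sqrt 2)⁻¹ • w)
    (hX2 : ∀ w ∈ rootsE8, ((Real.sqrt 2)⁻¹ • w ∈ X ↔ -((Real.sqrt 2)⁻¹ • w) ∉ X)) :
    ¬ (∀ a ∈ ({1, 1/2, 0, -1/2} : Set ℝ), ∀ b ∈ ({1, 1/2, 0, -1/2} : Set ℝ),
        ∀ c ∈ ({1, 1/2, 0, -1/2} : Set ℝ),
        ∀ x ∈ X, ∀ y ∈ X, ∀ x' ∈ X, ∀ y' ∈ X,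
        dot x y = c → dot x' y' = c →
        (X.filter fun z => dot z x = a ∧ dot z y = b).card =
          (X.filter fun z => dot z x' = a ∧ dot z y' = b).card) := by
  intro H
  set r1 : Fin 8 → ℝ := Pi.single 0 1 + Pi.single 1 1 with hr1
  set r2 : Fin 8 → ℝ := Pi.single 0 1 + Pi.single 2 1 with hr2
  set r3 : Fin 8 → ℝ := Pi.single 0 1 + Pi.single 3 1 with hr3
  have m1 : r1 ∈ rootsE8 := mem_pair 0 1 (by decide)
  have m2 : r2 ∈ rootsE8 := mem_pair 0 2 (by decide)
  have m3 : r3 ∈ rootsE8 := mem_pair 0 3 (by decide)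
  have m1n : -r1 ∈ rootsE8 := mem_pair_neg 0 1 (by decide)
  have m2n : -r2 ∈ rootsE8 := mem_pair_neg 0 2 (by decide)
  have m3n : -r3 ∈ rootsE8 := mem_pair_neg 0 3 (by decide)
  -- pairwise inner products
  have d12 : dot r1 r2 = 1 := by
    rw [hr1, hr2]
    simp only [dot_add_left, dot_add_right, dot_single_single]
    simp (config := { decide := true })
  have d13 : dot r1 r3 = 1 := by
    rw [hr1, hr3]
    simp only [dot_add_left, dot_add_right, dot_single_single]
    simp (config := { decide := true })
  have d23 : dot r2 r3 = 1 := by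
    rw [hr2, hr3]
    simp only [dot_add_left, dot_add_right, dot_single_single]
    simp (config := { decide := true })
  -- differences are roots
  have s12 : r1 - r2 ∈ rootsE8 := by
    have h : r1 - r2 = Pi.single 1 1 - Pi.single 2 (1:ℝ) := by rw [hr1, hr2]; abel
    rw [h]; exact mem_diff 1 2 (by decide)
  have s21 : r2 - r1 ∈ rootsE8 := by
    have h : r2 - r1 = -(Pi.single 1 1 - Pi.single 2 (1:ℝ)) := by rw [hr1, hr2]; abel
    rw [h]; exact mem_diff_neg 1 2 (by decide)
  have s13 : r1 - r3 ∈ rootsE8 := by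
    have h : r1 - r3 = Pi.single 1 1 - Pi.single 3 (1:ℝ) := by rw [hr1, hr3]; abel
    rw [h]; exact mem_diff 1 3 (by decide)
  have s31 : r3 - r1 ∈ rootsE8 := by
    have h : r3 - r1 = -(Pi.single 1 1 - Pi.single 3 (1:ℝ)) := by rw [hr1, hr3]; abel
    rw [h]; exact mem_diff_neg 1 3 (by decide)
  have s23 : r2 - r3 ∈ rootsE8 := by
    have h : r2 - r3 = Pi.single 2 1 - Pi.single 3 (1:ℝ) := by rw [hr2, hr3]; abel
    rw [h]; exact mem_diff 2 3 (by decide)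
  have s32 : r3 - r2 ∈ rootsE8 := by
    have h : r3 - r2 = -(Pi.single 2 1 - Pi.single 3 (1:ℝ)) := by rw [hr2, hr3]; abel
    rw [h]; exact mem_diff_neg 2 3 (by decide)
  -- negated inner products and differences
  have d12n : dot (-r1) (-r2) = 1 := by rw [dot_neg_left, dot_neg_right, d12]; ring
  have d13n : dot (-r1) (-r3) = 1 := by rw [dot_neg_left, dot_neg_right, d13]; ring
  have d23n : dot (-r2) (-r3) = 1 := by rw [dot_neg_left, dot_neg_right, d23]; ring
  have s12n : -r1 - -r2 ∈ rootsE8 := by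
    have h : -r1 - -r2 = r2 - r1 := by abel
    rw [h]; exact s21
  have s13n : -r1 - -r3 ∈ rootsE8 := by
    have h : -r1 - -r3 = r3 - r1 := by abel
    rw [h]; exact s31
  have s23n : -r2 - -r3 ∈ rootsE8 := by
    have h : -r2 - -r3 = r3 - r2 := by abel
    rw [h]; exact s32
  rcases pick_half X hX2 r1 m1 with p1 | p1 <;>
    rcases pick_half X hX2 r2 m2 with p2 | p2 <;>
      rcases pick_half X hX2 r3 m3 with p3 | p3
  · exact key_lemma X hX1 hX2 H r1 r2 m1 m2 d12 s12 p1 p2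
  · exact key_lemma X hX1 hX2 H r1 r2 m1 m2 d12 s12 p1 p2
  · exact key_lemma X hX1 hX2 H r1 r3 m1 m3 d13 s13 p1 p3
  · exact key_lemma X hX1 hX2 H (-r2) (-r3) m2n m3n d23n s23n p2 p3
  · exact key_lemma X hX1 hX2 H r2 r3 m2 m3 d23 s23 p2 p3
  · exact key_lemma X hX1 hX2 H (-r1) (-r3) m1n m3n d13n s13n p1 p3
  · exact key_lemma X hX1 hX2 H (-r1) (-r2) m1n m2n d12n s12n p1 p2
  · exact key_lemma X hX1 hX2 H (-r1) (-r2) m1n m2n d12n s12n p1 p2
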